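/- Let N ≥ 1, let ħ ≠ 0 and ν ≥ 0 be real, and let W, P : ℝ → M_N(ℂ) with W differentiable, W(t) and P(t) skew-Hermitian for every t, and dW/dt = −(1/ħ)·[W(t), P(t)] + (ν/ħ²)·[P(t), [P(t), W(t)]] (the hyperviscous Euler–Zeitlin equations). Let f : ℝ → ℝ be convex and continuously differentiable. Then the Casimir t ↦ tr(f(i·W(t))) (a real number, where f is applied to the Hermitian matrix i·W(t) via the continuous functional calculus) is non-increasing in t. -/

import Mathlib

open Matrix Finset

section Auxiliary

variable {N : ℕ}

private lemma trace_diagonal_mul' (d : Fin N → ℂ) (Y : Matrix (Fin N) (Fin N) ℂ) :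
    Matrix.trace (Matrix.diagonal d * Y) = ∑ j, d j * Y j j := by
  simp [Matrix.trace, Matrix.diag, Matrix.mul_apply, Matrix.diagonal_apply]

private lemma trace_mul_apply' (X Y : Matrix (Fin N) (Fin N) ℂ) :
    Matrix.trace (X * Y) = ∑ j, ∑ k, X j k * Y k j := by
  simp [Matrix.trace, Matrix.diag, Matrix.mul_apply]

private lemma conj_mul_conj' {u : Matrix (Fin N) (Fin N) ℂ} (hu : u * star u = 1)
    (X Y : Matrix (Fin N) (Fin N) ℂ) :
    star u * (X * Y) * u = (star u * X * u) * (star u * Y * u) := by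
  calc star u * (X * Y) * u = star u * X * (u * star u) * Y * u := by
        rw [hu]; simp only [Matrix.mul_one, Matrix.mul_assoc]
    _ = (star u * X * u) * (star u * Y * u) := by simp only [Matrix.mul_assoc]

private lemma trace_cfc_mul' {M : Matrix (Fin N) (Fin N) ℂ} (hM : M.IsHermitian) (f : ℝ → ℝ)
    (X : Matrix (Fin N) (Fin N) ℂ) :
    Matrix.trace (cfc f M * X) = ∑ j, (f (hM.eigenvalues j) : ℂ) *
      ((star (hM.eigenvectorUnitary : Matrix (Fin N) (Fin N) ℂ)) * X *
        (hM.eigenvectorUnitary : Matrix (Fin N) (Fin N) ℂ)) j j := by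
  set u : Matrix (Fin N) (Fin N) ℂ := (hM.eigenvectorUnitary : Matrix (Fin N) (Fin N) ℂ) with hu
  rw [hM.cfc_eq, Matrix.IsHermitian.cfc, Unitary.conjStarAlgAut_apply]
  have : (u * Matrix.diagonal (RCLike.ofReal ∘ f ∘ hM.eigenvalues) * star u) * X
      = u * (Matrix.diagonal (RCLike.ofReal ∘ f ∘ hM.eigenvalues) * (star u * X)) := by
    simp only [Matrix.mul_assoc]
  rw [this, Matrix.trace_mul_comm]
  have h2 : Matrix.diagonal (RCLike.ofReal ∘ f ∘ hM.eigenvalues) * (star u * X) * u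
      = Matrix.diagonal (RCLike.ofReal ∘ f ∘ hM.eigenvalues) * (star u * X * u) := by
    simp only [Matrix.mul_assoc]
  rw [h2, trace_diagonal_mul']
  rfl

private lemma trace_cfc' {M : Matrix (Fin N) (Fin N) ℂ} (hM : M.IsHermitian) (f : ℝ → ℝ) :
    Matrix.trace (cfc f M) = ∑ j, (f (hM.eigenvalues j) : ℂ) := by
  have h := trace_cfc_mul' hM f 1
  rw [Matrix.mul_one] at h
  rw [h, Matrix.mul_one, Unitary.star_mul_self_of_mem (SetLike.coe_mem _)]
  simp [Matrix.one_apply]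

/-- Klein's inequality for Hermitian matrices. -/
private lemma klein' {A B : Matrix (Fin N) (Fin N) ℂ} (hA : A.IsHermitian) (hB : B.IsHermitian)
    {f : ℝ → ℝ} (tangent_le : ∀ x y : ℝ, f x + deriv f x * (y - x) ≤ f y) :
    (Matrix.trace (cfc (deriv f) B * (A - B))).re ≤
      (Matrix.trace (cfc f A)).re - (Matrix.trace (cfc f B)).re := by
  classical
  set U : Matrix (Fin N) (Fin N) ℂ := (hB.eigenvectorUnitary : Matrix (Fin N) (Fin N) ℂ) with hU
  set V : Matrix (Fin N) (Fin N) ℂ := (hA.eigenvectorUnitary : Matrix (Fin N) (Fin N) ℂ) with hV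
  set μ : Fin N → ℝ := hB.eigenvalues
  set lam : Fin N → ℝ := hA.eigenvalues
  set S : Matrix (Fin N) (Fin N) ℂ := star U * V with hS
  set c : Fin N → Fin N → ℝ := fun j k => Complex.normSq (S j k) with hc
  have hUU : U * star U = 1 := Unitary.mul_star_self_of_mem (SetLike.coe_mem _)
  have hUU' : star U * U = 1 := Unitary.star_mul_self_of_mem (SetLike.coe_mem _)
  have hVV : V * star V = 1 := Unitary.mul_star_self_of_mem (SetLike.coe_mem _)
  have hVV' : star V * V = 1 := Unitary.star_mul_self_of_mem (SetLike.coe_mem _)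
  have hstarS : star S = star V * U := by rw [hS, StarMul.star_mul, star_star]
  have hentry : ∀ (dd : Fin N → ℂ) (j : Fin N),
      (S * Matrix.diagonal dd * star S) j j = ∑ k, dd k * ((c j k : ℝ) : ℂ) := by
    intro dd j
    rw [Matrix.mul_apply]
    refine Finset.sum_congr rfl fun k _ => ?_
    rw [Matrix.mul_diagonal, Matrix.star_apply]
    have : S j k * dd k * star (S j k) = dd k * (S j k * star (S j k)) := by ring
    rw [this, Complex.star_def, Complex.mul_conj]
  have hSS : S * star S = 1 := by
    rw [hstarS, hS]
    calc star U * V * (star V * U) = star U * (V * star V) * U := by simp only [Matrix.mul_assoc]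
      _ = 1 := by rw [hVV, Matrix.mul_one, hUU']
  have hSS' : star S * S = 1 := by
    rw [hstarS, hS]
    calc star V * U * (star U * V) = star V * (U * star U) * V := by simp only [Matrix.mul_assoc]
      _ = 1 := by rw [hUU, Matrix.mul_one, hVV']
  have hrow : ∀ j, ∑ k, c j k = 1 := by
    intro j
    have h1 : (S * star S) j j = (1 : Matrix (Fin N) (Fin N) ℂ) j j := by rw [hSS]
    rw [Matrix.mul_apply, Matrix.one_apply_eq] at h1
    have h2 : ∑ k, S j k * (star S) k j = ((∑ k, c j k : ℝ) : ℂ) := by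
      push_cast
      refine Finset.sum_congr rfl fun k _ => ?_
      rw [Matrix.star_apply, Complex.star_def, Complex.mul_conj]
    rw [h2] at h1
    exact_mod_cast h1
  have hcol : ∀ k, ∑ j, c j k = 1 := by
    intro k
    have h1 : (star S * S) k k = (1 : Matrix (Fin N) (Fin N) ℂ) k k := by rw [hSS']
    rw [Matrix.mul_apply, Matrix.one_apply_eq] at h1
    have h2 : ∑ j, (star S) k j * S j k = ((∑ j, c j k : ℝ) : ℂ) := by
      push_cast
      refine Finset.sum_congr rfl fun j _ => ?_
      rw [Matrix.star_apply, Complex.star_def, mul_comm, Complex.mul_conj]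
    rw [h2] at h1
    exact_mod_cast h1
  have htrA : Matrix.trace (cfc f A) = ((∑ k, f (lam k) : ℝ) : ℂ) := by
    rw [trace_cfc' hA f]; push_cast; rfl
  have htrB : Matrix.trace (cfc f B) = ((∑ j, f (μ j) : ℝ) : ℂ) := by
    rw [trace_cfc' hB f]; push_cast; rfl
  have hconjA : star U * A * U = S * Matrix.diagonal (fun k => ((lam k : ℝ) : ℂ)) * star S := by
    conv_lhs => rw [hA.spectral_theorem, Unitary.conjStarAlgAut_apply]
    rw [hS, hstarS]
    have : Matrix.diagonal (RCLike.ofReal ∘ hA.eigenvalues)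
        = Matrix.diagonal (fun k => ((lam k : ℝ) : ℂ)) := rfl
    rw [← this]
    simp only [Matrix.mul_assoc]
    rfl
  have htrDA : Matrix.trace (cfc (deriv f) B * A)
      = ((∑ j, deriv f (μ j) * ∑ k, lam k * c j k : ℝ) : ℂ) := by
    rw [trace_cfc_mul' hB (deriv f) A]
    push_cast
    refine Finset.sum_congr rfl fun j _ => ?_
    rw [← hU, hconjA, hentry]
  have htrDB : Matrix.trace (cfc (deriv f) B * B)
      = ((∑ j, deriv f (μ j) * μ j : ℝ) : ℂ) := by
    rw [trace_cfc_mul' hB (deriv f) B]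
    push_cast
    refine Finset.sum_congr rfl fun j _ => ?_
    rw [← hU, (show star (hB.eigenvectorUnitary : Matrix (Fin N) (Fin N) ℂ) * B * (hB.eigenvectorUnitary : Matrix (Fin N) (Fin N) ℂ) = Matrix.diagonal (RCLike.ofReal ∘ hB.eigenvalues) by have h := hB.conjStarAlgAut_star_eigenvectorUnitary; rwa [Unitary.conjStarAlgAut_star_apply] at h), Matrix.diagonal_apply_eq]
    rfl
  have hsplit : Matrix.trace (cfc (deriv f) B * (A - B))
      = Matrix.trace (cfc (deriv f) B * A) - Matrix.trace (cfc (deriv f) B * B) := by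
    rw [Matrix.mul_sub, Matrix.trace_sub]
  rw [hsplit, htrDA, htrDB, htrA, htrB]
  simp only [Complex.sub_re, Complex.ofReal_re]
  have key : ∀ j k, 0 ≤ c j k * (f (lam k) - f (μ j) - deriv f (μ j) * (lam k - μ j)) := by
    intro j k
    refine mul_nonneg (Complex.normSq_nonneg _) ?_
    have := tangent_le (μ j) (lam k)
    linarith
  have e1 : ∑ k, f (lam k) = ∑ j, ∑ k, c j k * f (lam k) := by
    rw [Finset.sum_comm]
    refine Finset.sum_congr rfl fun k _ => ?_
    rw [← Finset.sum_mul, hcol k, one_mul]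
  have e2 : ∑ j, f (μ j) = ∑ j, ∑ k, c j k * f (μ j) := by
    refine Finset.sum_congr rfl fun j _ => ?_
    rw [← Finset.sum_mul, hrow j, one_mul]
  have e3 : ∑ j, deriv f (μ j) * μ j = ∑ j, ∑ k, c j k * (deriv f (μ j) * μ j) := by
    refine Finset.sum_congr rfl fun j _ => ?_
    rw [← Finset.sum_mul, hrow j, one_mul]
  have e4 : ∑ j, deriv f (μ j) * ∑ k, lam k * c j k
      = ∑ j, ∑ k, c j k * (deriv f (μ j) * lam k) := by
    refine Finset.sum_congr rfl fun j _ => ?_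
    rw [Finset.mul_sum]
    exact Finset.sum_congr rfl fun k _ => by ring
  have hsum : (∑ k, f (lam k)) - (∑ j, f (μ j))
      - ((∑ j, deriv f (μ j) * ∑ k, lam k * c j k) - ∑ j, deriv f (μ j) * μ j)
      = ∑ j, ∑ k, c j k * (f (lam k) - f (μ j) - deriv f (μ j) * (lam k - μ j)) := by
    rw [e1, e2, e3, e4, ← Finset.sum_sub_distrib, ← Finset.sum_sub_distrib,
      ← Finset.sum_sub_distrib]
    refine Finset.sum_congr rfl fun j _ => ?_
    rw [← Finset.sum_sub_distrib, ← Finset.sum_sub_distrib, ← Finset.sum_sub_distrib]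
    refine Finset.sum_congr rfl fun k _ => by ring
  have hpos : 0 ≤ ∑ j, ∑ k, c j k * (f (lam k) - f (μ j) - deriv f (μ j) * (lam k - μ j)) :=
    Finset.sum_nonneg fun j _ => Finset.sum_nonneg fun k _ => key j k
  linarith [hsum ▸ hpos]

private lemma trace_cfc_mul_comm_self' {M Pm : Matrix (Fin N) (Fin N) ℂ} (hM : M.IsHermitian)
    (g : ℝ → ℝ) :
    Matrix.trace (cfc g M * (M * Pm - Pm * M)) = 0 := by
  set u : Matrix (Fin N) (Fin N) ℂ := (hM.eigenvectorUnitary : Matrix (Fin N) (Fin N) ℂ) with hu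
  have huu : u * star u = 1 := Unitary.mul_star_self_of_mem (SetLike.coe_mem _)
  set D : Matrix (Fin N) (Fin N) ℂ := Matrix.diagonal (RCLike.ofReal ∘ hM.eigenvalues) with hD
  have hDiag : star u * M * u = D := (by have h := hM.conjStarAlgAut_star_eigenvectorUnitary; rwa [Unitary.conjStarAlgAut_star_apply] at h)
  set Pt : Matrix (Fin N) (Fin N) ℂ := star u * Pm * u with hPt
  rw [trace_cfc_mul' hM g]
  have hXt : star u * (M * Pm - Pm * M) * u = D * Pt - Pt * D := by
    rw [Matrix.mul_sub, Matrix.sub_mul, conj_mul_conj' huu M Pm, conj_mul_conj' huu Pm M,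
      hDiag]
  rw [← hu, hXt]
  refine Finset.sum_eq_zero fun j _ => ?_
  rw [Matrix.sub_apply, hD, Matrix.diagonal_mul, Matrix.mul_diagonal]
  ring

private lemma diss_nonpos' {M Pm : Matrix (Fin N) (Fin N) ℂ} (hM : M.IsHermitian)
    (hP : Pmᴴ = -Pm) (g : ℝ → ℝ) (hg : Monotone g) :
    (Matrix.trace (cfc g M * (Pm * (Pm * M - M * Pm) - (Pm * M - M * Pm) * Pm))).re ≤ 0 := by
  classical
  set u : Matrix (Fin N) (Fin N) ℂ := (hM.eigenvectorUnitary : Matrix (Fin N) (Fin N) ℂ) with hu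
  have huu : u * star u = 1 := Unitary.mul_star_self_of_mem (SetLike.coe_mem _)
  set lam : Fin N → ℝ := hM.eigenvalues with hlam
  set D : Matrix (Fin N) (Fin N) ℂ := Matrix.diagonal (RCLike.ofReal ∘ hM.eigenvalues) with hD
  have hDiag : star u * M * u = D := (by have h := hM.conjStarAlgAut_star_eigenvectorUnitary; rwa [Unitary.conjStarAlgAut_star_apply] at h)
  set Pt : Matrix (Fin N) (Fin N) ℂ := star u * Pm * u with hPt
  set q : Fin N → Fin N → ℝ := fun j k => Complex.normSq (Pt j k) with hq
  have hPtskew : ∀ j k, Pt k j = -star (Pt j k) := by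
    intro j k
    have h1 : star Pt = -Pt := by
      rw [hPt, StarMul.star_mul, StarMul.star_mul, star_star]
      rw [Matrix.star_eq_conjTranspose Pm, hP]
      simp only [Matrix.mul_neg, Matrix.neg_mul, Matrix.mul_assoc]
    have h2 := congrFun (congrFun h1 k) j
    rw [Matrix.star_apply] at h2
    have h3 : (-Pt) k j = -(Pt k j) := rfl
    rw [h3] at h2
    rw [h2, neg_neg]
  have hC1 : star u * (Pm * M - M * Pm) * u = Pt * D - D * Pt := by
    rw [Matrix.mul_sub, Matrix.sub_mul, conj_mul_conj' huu Pm M, conj_mul_conj' huu M Pm, hDiag]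
  have hXt : star u * (Pm * (Pm * M - M * Pm) - (Pm * M - M * Pm) * Pm) * u
      = Pt * (Pt * D - D * Pt) - (Pt * D - D * Pt) * Pt := by
    rw [Matrix.mul_sub, Matrix.sub_mul,
      conj_mul_conj' huu Pm (Pm * M - M * Pm), conj_mul_conj' huu (Pm * M - M * Pm) Pm, hC1]
  rw [trace_cfc_mul' hM g, ← hu, hXt]
  have hE : ∀ j, (Pt * (Pt * D - D * Pt) - (Pt * D - D * Pt) * Pt) j j
      = ((∑ k, 2 * (lam k - lam j) * q j k : ℝ) : ℂ) := by
    intro j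
    rw [Matrix.sub_apply, Matrix.mul_apply, Matrix.mul_apply, ← Finset.sum_sub_distrib]
    push_cast
    refine Finset.sum_congr rfl fun k _ => ?_
    rw [Matrix.sub_apply, Matrix.sub_apply, hD, Matrix.diagonal_mul, Matrix.mul_diagonal,
      Matrix.diagonal_mul, Matrix.mul_diagonal, hPtskew j k]
    have hz : Pt j k * star (Pt j k) = ((q j k : ℝ) : ℂ) := by
      rw [hq, Complex.star_def, Complex.mul_conj]
    simp only [Function.comp_apply]
    calc Pt j k * (-star (Pt j k) * ((lam j : ℝ) : ℂ) - ((lam k : ℝ) : ℂ) * -star (Pt j k))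
          - (Pt j k * ((lam k : ℝ) : ℂ) - ((lam j : ℝ) : ℂ) * Pt j k) * -star (Pt j k)
        = (2 * (((lam k : ℝ) : ℂ) - ((lam j : ℝ) : ℂ))) * (Pt j k * star (Pt j k)) := by ring
      _ = 2 * (((lam k : ℝ) : ℂ) - ((lam j : ℝ) : ℂ)) * ((q j k : ℝ) : ℂ) := by rw [hz]
  have htr : (∑ j, (g (lam j) : ℂ) * (Pt * (Pt * D - D * Pt) - (Pt * D - D * Pt) * Pt) j j)
      = ((∑ j, ∑ k, g (lam j) * (2 * (lam k - lam j) * q j k) : ℝ) : ℂ) := by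
    push_cast
    refine Finset.sum_congr rfl fun j _ => ?_
    rw [hE j]
    push_cast
    rw [Finset.mul_sum]
  rw [htr, Complex.ofReal_re]
  have hqsym : ∀ j k, q j k = q k j := by
    intro j k
    rw [hq]
    simp only
    rw [hPtskew j k, Complex.normSq_neg, Complex.star_def, Complex.normSq_conj]
  have key : ∀ j k, g (lam j) * (2 * (lam k - lam j) * q j k)
      + g (lam k) * (2 * (lam j - lam k) * q k j)
      = -2 * ((g (lam j) - g (lam k)) * (lam j - lam k)) * q j k := by
    intro j k
    rw [← hqsym j k]; ring
  have hterm : ∀ j k, 0 ≤ (g (lam j) - g (lam k)) * (lam j - lam k) := by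
    intro j k
    rcases le_total (lam j) (lam k) with h | h
    · have := hg h
      nlinarith
    · have := hg h
      nlinarith
  have hdouble : (∑ j, ∑ k, g (lam j) * (2 * (lam k - lam j) * q j k))
      + (∑ j, ∑ k, g (lam j) * (2 * (lam k - lam j) * q j k)) ≤ 0 := by
    have hswap : (∑ j, ∑ k, g (lam j) * (2 * (lam k - lam j) * q j k))
        = ∑ j, ∑ k, g (lam k) * (2 * (lam j - lam k) * q k j) := by
      rw [Finset.sum_comm]
    nth_rewrite 2 [hswap]
    rw [← Finset.sum_add_distrib]
    refine Finset.sum_nonpos fun j _ => ?_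
    rw [← Finset.sum_add_distrib]
    refine Finset.sum_nonpos fun k _ => ?_
    rw [key j k]
    have := hterm j k
    have hq0 : 0 ≤ q j k := Complex.normSq_nonneg _
    nlinarith
  linarith

private lemma eigvec_entry_bound' {M : Matrix (Fin N) (Fin N) ℂ} (hM : M.IsHermitian)
    (i k : Fin N) :
    ‖(hM.eigenvectorUnitary : Matrix (Fin N) (Fin N) ℂ) i k‖ ≤ 1 := by
  set u : Matrix (Fin N) (Fin N) ℂ := (hM.eigenvectorUnitary : Matrix (Fin N) (Fin N) ℂ)
  have huu : star u * u = 1 := Unitary.star_mul_self_of_mem (SetLike.coe_mem _)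
  have h1 : (star u * u) k k = 1 := by rw [huu, Matrix.one_apply_eq]
  rw [Matrix.mul_apply] at h1
  have h2 : ∑ a, (star u) k a * u a k = ((∑ a, Complex.normSq (u a k) : ℝ) : ℂ) := by
    push_cast
    refine Finset.sum_congr rfl fun a _ => ?_
    rw [Matrix.star_apply, Complex.star_def, mul_comm, Complex.mul_conj]
  rw [h2] at h1
  have h3 : ∑ a, Complex.normSq (u a k) = 1 := by exact_mod_cast h1
  have h4 : Complex.normSq (u i k) ≤ 1 := by
    rw [← h3]
    exact Finset.single_le_sum (f := fun a => Complex.normSq (u a k))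
      (fun a _ => Complex.normSq_nonneg _) (Finset.mem_univ i)
  have h5 : ‖u i k‖ ^ 2 ≤ 1 := by rwa [← Complex.sq_norm] at h4
  nlinarith [norm_nonneg (u i k)]

private lemma cfc_entry_bound' {M : Matrix (Fin N) (Fin N) ℂ} (hM : M.IsHermitian)
    (g : ℝ → ℝ) (K : ℝ) (hK : ∀ k, |g (hM.eigenvalues k)| ≤ K)
    (i j : Fin N) : ‖(cfc g M) i j‖ ≤ N * K := by
  rw [hM.cfc_eq, Matrix.IsHermitian.cfc, Unitary.conjStarAlgAut_apply]
  set u : Matrix (Fin N) (Fin N) ℂ := (hM.eigenvectorUnitary : Matrix (Fin N) (Fin N) ℂ) with hu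
  have hentry : (u * Matrix.diagonal ((RCLike.ofReal : ℝ → ℂ) ∘ g ∘ hM.eigenvalues) * star u) i j
      = ∑ k, u i k * (g (hM.eigenvalues k) : ℂ) * star (u j k) := by
    rw [Matrix.mul_apply]
    refine Finset.sum_congr rfl fun k _ => ?_
    rw [Matrix.mul_diagonal, Matrix.star_apply]
    rfl
  rw [hentry]
  calc ‖∑ k, u i k * (g (hM.eigenvalues k) : ℂ) * star (u j k)‖
      ≤ ∑ k, ‖u i k * (g (hM.eigenvalues k) : ℂ) * star (u j k)‖ := norm_sum_le _ _
    _ ≤ ∑ k : Fin N, K := by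
        refine Finset.sum_le_sum fun k _ => ?_
        rw [norm_mul, norm_mul, norm_star]
        have h1 := eigvec_entry_bound' hM i k
        have h2 := eigvec_entry_bound' hM j k
        have h3 : ‖((g (hM.eigenvalues k) : ℝ) : ℂ)‖ = |g (hM.eigenvalues k)| := by
          rw [Complex.norm_real, Real.norm_eq_abs]
        calc ‖u i k‖ * ‖((g (hM.eigenvalues k) : ℝ) : ℂ)‖ * ‖u j k‖
            ≤ 1 * ‖((g (hM.eigenvalues k) : ℝ) : ℂ)‖ * 1 := by
              apply mul_le_mul (mul_le_mul h1 le_rfl (norm_nonneg _) zero_le_one) h2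
                (norm_nonneg _)
              positivity
          _ = |g (hM.eigenvalues k)| := by rw [one_mul, mul_one, h3]
          _ ≤ K := hK k
    _ = N * K := by rw [Finset.sum_const, Finset.card_univ, Fintype.card_fin, nsmul_eq_mul]

private lemma eig_sq_bound' {M : Matrix (Fin N) (Fin N) ℂ} (hM : M.IsHermitian) (j : Fin N) :
    (hM.eigenvalues j) ^ 2 ≤ ∑ a, ∑ b, Complex.normSq (M a b) := by
  set u : Matrix (Fin N) (Fin N) ℂ := (hM.eigenvectorUnitary : Matrix (Fin N) (Fin N) ℂ) with hu
  have hM' : IsSelfAdjoint M := hM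
  have hId : cfc (fun x => x : ℝ → ℝ) M = M := cfc_id' ℝ M
  have h1 := trace_cfc_mul' hM (fun x => x) M
  rw [hId] at h1
  have hDiag : star u * M * u = Matrix.diagonal (RCLike.ofReal ∘ hM.eigenvalues) :=
    (by have h := hM.conjStarAlgAut_star_eigenvectorUnitary; rwa [Unitary.conjStarAlgAut_star_apply] at h)
  rw [← hu, hDiag] at h1
  have h2 : Matrix.trace (M * M) = ((∑ k, (hM.eigenvalues k)^2 : ℝ) : ℂ) := by
    rw [h1]
    push_cast
    refine Finset.sum_congr rfl fun k _ => ?_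
    rw [Matrix.diagonal_apply_eq]
    simp [sq]
  have h3 : Matrix.trace (M * M) = ((∑ a, ∑ b, Complex.normSq (M a b) : ℝ) : ℂ) := by
    rw [trace_mul_apply']
    push_cast
    refine Finset.sum_congr rfl fun a _ => Finset.sum_congr rfl fun b _ => ?_
    have hab : M b a = star (M a b) := by
      conv_lhs => rw [← hM]
      rfl
    rw [hab, Complex.star_def, Complex.mul_conj]
  have h4 : ∑ k, (hM.eigenvalues k)^2 = ∑ a, ∑ b, Complex.normSq (M a b) := by
    have := h2.symm.trans h3
    exact_mod_cast this
  rw [← h4]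
  exact Finset.single_le_sum (f := fun k => (hM.eigenvalues k)^2)
    (fun k _ => sq_nonneg _) (Finset.mem_univ j)

private lemma trace_re_abs_bound' (Dm X : Matrix (Fin N) (Fin N) ℂ) (K : ℝ) (hK0 : 0 ≤ K)
    (hK : ∀ i j, ‖Dm i j‖ ≤ K) :
    |(Matrix.trace (Dm * X)).re| ≤ K * ∑ i, ∑ j, ‖X i j‖ := by
  rw [trace_mul_apply', Complex.re_sum]
  calc |∑ j, (∑ k, Dm j k * X k j).re| ≤ ∑ j, |(∑ k, Dm j k * X k j).re| :=
        Finset.abs_sum_le_sum_abs _ _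
    _ ≤ ∑ j, ∑ k, K * ‖X k j‖ := by
        refine Finset.sum_le_sum fun j _ => ?_
        rw [Complex.re_sum]
        calc |∑ k, (Dm j k * X k j).re| ≤ ∑ k, |(Dm j k * X k j).re| :=
              Finset.abs_sum_le_sum_abs _ _
          _ ≤ ∑ k, K * ‖X k j‖ := by
              refine Finset.sum_le_sum fun k _ => ?_
              calc |(Dm j k * X k j).re| ≤ ‖Dm j k * X k j‖ := Complex.abs_re_le_norm _
                _ = ‖Dm j k‖ * ‖X k j‖ := norm_mul _ _
                _ ≤ K * ‖X k j‖ := mul_le_mul_of_nonneg_right (hK j k) (norm_nonneg _)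
    _ = K * ∑ i, ∑ j, ‖X i j‖ := by
        rw [Finset.mul_sum, Finset.sum_comm]
        refine Finset.sum_congr rfl fun i _ => by rw [Finset.mul_sum]

private lemma tangent_le' {f : ℝ → ℝ} (hconv : ConvexOn ℝ Set.univ f)
    (hd : Differentiable ℝ f) (x y : ℝ) :
    f x + deriv f x * (y - x) ≤ f y := by
  rcases lt_trichotomy x y with h | h | h
  · have := hconv.deriv_le_slope (Set.mem_univ x) (Set.mem_univ y) h (hd x)
    rw [slope_def_field] at this
    have h' : 0 < y - x := by linarith
    rw [le_div_iff₀ h'] at this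
    linarith
  · simp [h]
  · have := hconv.slope_le_deriv (Set.mem_univ y) (Set.mem_univ x) h (hd x)
    rw [slope_def_field] at this
    have h' : 0 < x - y := by linarith
    rw [div_le_iff₀ h'] at this
    nlinarith

private lemma deriv_mono' {f : ℝ → ℝ} (hconv : ConvexOn ℝ Set.univ f)
    (hd : Differentiable ℝ f) :
    Monotone (deriv f) := by
  intro x y hxy
  rcases eq_or_lt_of_le hxy with rfl | h
  · exact le_refl _
  · exact (hconv.deriv_le_slope (Set.mem_univ x) (Set.mem_univ y) h (hd x)).trans
      (hconv.slope_le_deriv (Set.mem_univ x) (Set.mem_univ y) h (hd y))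

end Auxiliary

/-- along the hyperviscous Euler–Zeitlin flow
`dW/dt = -(1/ħ)[W,P] + (ν/ħ²)[P,[P,W]]` with `W(t), P(t)` skew-Hermitian (derivative stated
entrywise via `HasDerivAt`), for every convex, continuously differentiable `f : ℝ → ℝ` the
Casimir `t ↦ tr(f(i·W(t)))` is a real number and is non-increasing in `t`.  Here `f` is
applied to the Hermitian matrix `i·W(t)` via the continuous functional calculus. -/
theorem casimir_nonincreasing_hyperviscous_euler_zeitlin
    {N : ℕ} (hN : 1 ≤ N) (hbar ν : ℝ) (hbar_ne : hbar ≠ 0) (hν : 0 ≤ ν)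
    (W P : ℝ → Matrix (Fin N) (Fin N) ℂ)
    (hWskew : ∀ t : ℝ, (W t)ᴴ = -W t) (hPskew : ∀ t : ℝ, (P t)ᴴ = -P t)
    (hW : ∀ (t : ℝ) (i j : Fin N),
      HasDerivAt (fun s => W s i j)
        ((-(1 / hbar) • (W t * P t - P t * W t)
          + (ν / hbar ^ 2) • (P t * (P t * W t - W t * P t)
            - (P t * W t - W t * P t) * P t)) i j) t)
    (f : ℝ → ℝ) (hf_convex : ConvexOn ℝ Set.univ f) (hf_smooth : ContDiff ℝ 1 f) :
    (∀ t : ℝ, (Matrix.trace (cfc f (Complex.I • W t))).im = 0) ∧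
    Antitone (fun t : ℝ => (Matrix.trace (cfc f (Complex.I • W t))).re) := by
  have hAherm : ∀ t : ℝ, (Complex.I • W t).IsHermitian := by
    intro t
    unfold Matrix.IsHermitian
    rw [Matrix.conjTranspose_smul, hWskew t]
    simp [Complex.star_def, Complex.conj_I]
  constructor
  · intro t
    rw [trace_cfc' (hAherm t) f]
    rw [Complex.im_sum]
    simp
  -- notation
  set A : ℝ → Matrix (Fin N) (Fin N) ℂ := fun t => Complex.I • W t with hA
  set E : ℝ → Matrix (Fin N) (Fin N) ℂ := fun t =>
    -(1 / hbar) • (W t * P t - P t * W t)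
      + (ν / hbar ^ 2) • (P t * (P t * W t - W t * P t) - (P t * W t - W t * P t) * P t)
    with hE
  set g : ℝ → ℝ := fun t => (Matrix.trace (cfc f (A t))).re with hg
  show Antitone g
  have hd : Differentiable ℝ f := hf_smooth.differentiable one_ne_zero
  have htan := tangent_le' hf_convex hd
  have hmono := deriv_mono' hf_convex hd
  have hf'cont : Continuous (deriv f) := hf_smooth.continuous_deriv le_rfl
  have hA' : ∀ (t : ℝ) (i j : Fin N),
      HasDerivAt (fun s => A s i j) ((Complex.I • E t) i j) t := by
    intro t i j
    have h1 := (hW t i j).const_mul Complex.I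
    simpa [hA, hE, Matrix.smul_apply, smul_eq_mul] using h1
  have hAcont : ∀ i j : Fin N, Continuous fun t => A t i j := fun i j =>
    continuous_iff_continuousAt.2 fun t => (hA' t i j).continuousAt
  -- rewriting the tangent vector in terms of A
  have hIE : ∀ t : ℝ, Complex.I • E t
      = (-(1 / hbar) : ℝ) • (A t * P t - P t * A t)
        + ((ν / hbar ^ 2) : ℝ) •
          (P t * (P t * A t - A t * P t) - (P t * A t - A t * P t) * P t) := by
    intro t
    have c1 : Complex.I • (W t * P t - P t * W t) = A t * P t - P t * A t := by
      rw [smul_sub, ← smul_mul_assoc, ← mul_smul_comm]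
    have c2 : Complex.I • (P t * W t - W t * P t) = P t * A t - A t * P t := by
      rw [smul_sub, ← mul_smul_comm, ← smul_mul_assoc]
    have c3 : Complex.I • (P t * (P t * W t - W t * P t) - (P t * W t - W t * P t) * P t)
        = P t * (P t * A t - A t * P t) - (P t * A t - A t * P t) * P t := by
      rw [smul_sub, ← mul_smul_comm, ← smul_mul_assoc, c2]
    rw [hE]
    simp only
    rw [smul_add, smul_comm Complex.I (-(1 / hbar) : ℝ), smul_comm Complex.I ((ν / hbar ^ 2) : ℝ),
      c1, c3]
  -- the derivative of the Casimir is nonpositive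
  have hdle : ∀ y : ℝ, (Matrix.trace (cfc (deriv f) (A y) * (Complex.I • E y))).re ≤ 0 := by
    intro y
    rw [hIE y, Matrix.mul_add, Matrix.trace_add, Complex.add_re]
    have t1 : Matrix.trace (cfc (deriv f) (A y)
        * ((-(1 / hbar) : ℝ) • (A y * P y - P y * A y))) = 0 := by
      rw [mul_smul_comm, Matrix.trace_smul, trace_cfc_mul_comm_self' (hAherm y), smul_zero]
    have t2 : (Matrix.trace (cfc (deriv f) (A y) * (((ν / hbar ^ 2) : ℝ) •
        (P y * (P y * A y - A y * P y) - (P y * A y - A y * P y) * P y)))).re ≤ 0 := by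
      rw [mul_smul_comm, Matrix.trace_smul]
      have hre : ∀ (r : ℝ) (z : ℂ), (r • z).re = r * z.re := by
        intro r z
        rw [Complex.real_smul]
        simp
      rw [hre]
      have hcoef : (0:ℝ) ≤ ν / hbar ^ 2 := div_nonneg hν (sq_nonneg hbar)
      have hneg := diss_nonpos' (hAherm y) (hPskew y) (deriv f) hmono
      exact mul_nonpos_of_nonneg_of_nonpos hcoef hneg
    rw [t1]
    simpa using t2
  -- continuity of g
  have hgcont : Continuous g := by
    rw [continuous_iff_continuousAt]
    intro t
    set ρ : ℝ → ℝ := fun s => ∑ a, ∑ b, Complex.normSq (A s a b) with hρ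
    have hρcont : Continuous ρ := by
      refine continuous_finset_sum _ fun a _ => continuous_finset_sum _ fun b _ => ?_
      exact Complex.continuous_normSq.comp (hAcont a b)
    obtain ⟨C, hC⟩ : ∃ C, ∀ s ∈ Set.Icc (t - 1) (t + 1), ρ s ≤ C := by
      obtain ⟨C, hC⟩ := ((isCompact_Icc (a := t - 1) (b := t + 1)).image_of_continuousOn
        hρcont.continuousOn).bddAbove
      exact ⟨C, fun s hs => hC (Set.mem_image_of_mem _ hs)⟩
    set R := Real.sqrt C with hR
    have hlamb : ∀ s ∈ Set.Icc (t - 1) (t + 1), ∀ k, |(hAherm s).eigenvalues k| ≤ R := by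
      intro s hs k
      have h2 : ((hAherm s).eigenvalues k) ^ 2 ≤ C := le_trans (eig_sq_bound' (hAherm s) k) (hC s hs)
      calc |(hAherm s).eigenvalues k| = Real.sqrt (((hAherm s).eigenvalues k) ^ 2) :=
            (Real.sqrt_sq_eq_abs _).symm
        _ ≤ R := Real.sqrt_le_sqrt h2
    obtain ⟨K0, hK0nn, hK0⟩ : ∃ K0, 0 ≤ K0 ∧ ∀ x ∈ Set.Icc (-R) R, |deriv f x| ≤ K0 := by
      obtain ⟨C', hC'⟩ := ((isCompact_Icc (a := -R) (b := R)).image_of_continuousOn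
        (hf'cont.abs.continuousOn)).bddAbove
      refine ⟨max C' 0, le_max_right _ _, fun x hx => ?_⟩
      exact le_trans (hC' (Set.mem_image_of_mem _ hx)) (le_max_left _ _)
    set K : ℝ := (N : ℝ) * K0 with hK
    have hKnn : 0 ≤ K := mul_nonneg (Nat.cast_nonneg _) hK0nn
    have hDbound : ∀ s ∈ Set.Icc (t - 1) (t + 1), ∀ i j : Fin N,
        ‖(cfc (deriv f) (A s)) i j‖ ≤ K := by
      intro s hs i j
      refine cfc_entry_bound' (hAherm s) (deriv f) K0 (fun k => ?_) i j
      exact hK0 _ (abs_le.1 (hlamb s hs k))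
    have hsand : ∀ s ∈ Set.Icc (t - 1) (t + 1),
        |g s - g t| ≤ K * ∑ a, ∑ b, ‖(A s - A t) a b‖ := by
      intro s hs
      have ht' : t ∈ Set.Icc (t - 1) (t + 1) := by constructor <;> linarith
      have k1 := klein' (hAherm s) (hAherm t) htan
      have k2 := klein' (hAherm t) (hAherm s) htan
      have b1 := trace_re_abs_bound' (cfc (deriv f) (A t)) (A s - A t) K hKnn (hDbound t ht')
      have b2 := trace_re_abs_bound' (cfc (deriv f) (A s)) (A t - A s) K hKnn (hDbound s hs)
      have hsym : ∑ a, ∑ b, ‖(A t - A s) a b‖ = ∑ a, ∑ b, ‖(A s - A t) a b‖ := by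
        refine Finset.sum_congr rfl fun a _ => Finset.sum_congr rfl fun b _ => ?_
        rw [Matrix.sub_apply, Matrix.sub_apply, norm_sub_rev]
      rw [abs_le]
      have hb1 := abs_le.1 b1
      have hb2 := abs_le.1 b2
      constructor
      · have := hb1.1
        have hk1 : (Matrix.trace (cfc (deriv f) (A t) * (A s - A t))).re ≤ g s - g t := k1
        linarith
      · have := hb2.1
        have hk2 : (Matrix.trace (cfc (deriv f) (A s) * (A t - A s))).re ≤ g t - g s := k2
        rw [hsym] at this
        linarith
    have hBcont : Continuous fun s => K * ∑ a, ∑ b, ‖(A s - A t) a b‖ := by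
      refine continuous_const.mul ?_
      refine continuous_finset_sum _ fun a _ => continuous_finset_sum _ fun b _ => ?_
      exact ((hAcont a b).sub continuous_const).norm
    have hB0 : Filter.Tendsto (fun s => K * ∑ a, ∑ b, ‖(A s - A t) a b‖) (nhds t) (nhds 0) := by
      have h0 : K * ∑ a : Fin N, ∑ b : Fin N, ‖(A t - A t) a b‖ = 0 := by simp
      have := hBcont.tendsto t
      rwa [h0] at this
    have hev : ∀ᶠ s in nhds t, ‖g s - g t‖ ≤ K * ∑ a, ∑ b, ‖(A s - A t) a b‖ := by
      have hmem : Set.Icc (t - 1) (t + 1) ∈ nhds t := Icc_mem_nhds (by linarith) (by linarith)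
      filter_upwards [hmem] with s hs
      rw [Real.norm_eq_abs]
      exact hsand s hs
    have h1 : Filter.Tendsto (fun s => g s - g t) (nhds t) (nhds 0) := squeeze_zero_norm' hev hB0
    have h2 : Filter.Tendsto g (nhds t) (nhds (g t)) := by
      have := h1.add (tendsto_const_nhds (x := g t))
      simpa using this
    exact h2
  -- the fencing argument
  intro s t hst
  rcases eq_or_lt_of_le hst with rfl | hlt
  · exact le_rfl
  show g t ≤ g s
  set φ : ℝ → ℝ := fun u => -g (-u) with hφ
  have hφcont : Continuous φ := (hgcont.comp continuous_neg).neg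
  have hab : -t ≤ -s := by linarith
  have bound : ∀ x ∈ Set.Ico (-t) (-s), ∀ r : ℝ, (0:ℝ) < r →
      ∃ᶠ z in nhdsWithin x (Set.Ioi x), slope φ x z < r := by
    intro x _ r hr
    set y := -x with hy
    set Dm := cfc (deriv f) (A y) with hDm
    set T : ℝ → ℝ := fun z => (Matrix.trace (Dm * (A y - A (-z)))).re / (z - x) with hT
    -- pointwise bound on the slope of φ by T
    have hslope : ∀ z ∈ Set.Ioi x, slope φ x z ≤ T z := by
      intro z hz
      have hzx : x < z := hz
      have hpos : (0:ℝ) < z - x := by linarith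
      have k1 := klein' (hAherm (-z)) (hAherm y) htan
      have hnum : g y - g (-z) ≤ (Matrix.trace (Dm * (A y - A (-z)))).re := by
        have hflip : A y - A (-z) = -(A (-z) - A y) := (neg_sub _ _).symm
        have : Matrix.trace (Dm * (A y - A (-z)))
            = -Matrix.trace (Dm * (A (-z) - A y)) := by
          rw [hflip, Matrix.mul_neg, Matrix.trace_neg]
        rw [this, Complex.neg_re]
        have hk : (Matrix.trace (Dm * (A (-z) - A y))).re ≤ g (-z) - g y := k1
        linarith
      have hslφ : slope φ x z = (g y - g (-z)) / (z - x) := by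
        rw [slope_def_field]
        have h1 : φ z = -g (-z) := rfl
        have h2 : φ x = -g y := rfl
        rw [h1, h2]; ring
      rw [hslφ, hT]
      exact (div_le_div_iff_of_pos_right hpos).mpr hnum
    -- T tends to the (nonpositive) derivative value
    have hTform : ∀ z : ℝ, x < z →
        T z = ∑ j, ∑ k, (Dm j k * slope (fun v => A v k j) y (-z)).re := by
      intro z hzx
      have hpos : (0:ℝ) < z - x := by linarith
      rw [hT]
      simp only
      rw [trace_mul_apply', Complex.re_sum, Finset.sum_div]
      refine Finset.sum_congr rfl fun j _ => ?_
      rw [Complex.re_sum, Finset.sum_div]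
      refine Finset.sum_congr rfl fun k _ => ?_
      have hsl : slope (fun v => A v k j) y (-z)
          = ((z - x)⁻¹ : ℝ) • (A y k j - A (-z) k j) := by
        rw [slope_def_module]
        have h1 : -z - y = -(z - x) := by rw [hy]; ring
        rw [h1, inv_neg, neg_smul, ← smul_neg, neg_sub]
      rw [hsl, Complex.real_smul]
      have : Dm j k * ((((z - x)⁻¹ : ℝ) : ℂ) * (A y k j - A (-z) k j))
          = (((z - x)⁻¹ : ℝ) : ℂ) * (Dm j k * (A y k j - A (-z) k j)) := by ring
      rw [this]
      have hre : ∀ (u : ℝ) (w : ℂ), ((u : ℂ) * w).re = u * w.re := fun u w => by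
        simp [Complex.mul_re]
      rw [hre, Matrix.sub_apply, div_eq_inv_mul]
    have hTtendsto : Filter.Tendsto T (nhdsWithin x (Set.Ioi x))
        (nhds ((Matrix.trace (Dm * (Complex.I • E y))).re)) := by
      have hform : (Matrix.trace (Dm * (Complex.I • E y))).re
          = ∑ j, ∑ k, (Dm j k * (Complex.I • E y) k j).re := by
        rw [trace_mul_apply', Complex.re_sum]
        exact Finset.sum_congr rfl fun j _ => Complex.re_sum _ _
      rw [hform]
      have hsum : Filter.Tendsto
          (fun z => ∑ j, ∑ k, (Dm j k * slope (fun v => A v k j) y (-z)).re)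
          (nhdsWithin x (Set.Ioi x))
          (nhds (∑ j, ∑ k, (Dm j k * (Complex.I • E y) k j).re)) := by
        refine tendsto_finset_sum _ fun j _ => tendsto_finset_sum _ fun k _ => ?_
        have hs1 : Filter.Tendsto (slope (fun v => A v k j) y)
            (nhdsWithin y {y}ᶜ) (nhds ((Complex.I • E y) k j)) :=
          hasDerivAt_iff_tendsto_slope.1 (hA' y k j)
        have hneg : Filter.Tendsto (fun z : ℝ => -z) (nhdsWithin x (Set.Ioi x))
            (nhdsWithin y {y}ᶜ) := by
          rw [nhdsWithin, nhdsWithin]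
          refine Filter.Tendsto.inf ?_ ?_
          · have : Filter.Tendsto (fun z : ℝ => -z) (nhds x) (nhds (-x)) :=
              (continuous_neg.tendsto x)
            rwa [← hy] at this
          · rw [Filter.tendsto_principal_principal]
            intro z hz
            have hxz : x < z := hz
            simp only [Set.mem_compl_iff, Set.mem_singleton_iff]
            intro hcon
            rw [hy] at hcon
            have : z = x := neg_injective hcon
            linarith
        have hcomp := hs1.comp hneg
        have hmul := (Filter.Tendsto.const_mul (Dm j k) hcomp)
        exact (Complex.continuous_re.tendsto _).comp hmul
      refine hsum.congr' ?_
      have hmem : ∀ᶠ z in nhdsWithin x (Set.Ioi x), z ∈ Set.Ioi x := self_mem_nhdsWithin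
      filter_upwards [hmem] with z hz
      exact (hTform z hz).symm
    have hfin : ∀ᶠ z in nhdsWithin x (Set.Ioi x), slope φ x z < r := by
      have h1 : (Matrix.trace (Dm * (Complex.I • E y))).re < r := lt_of_le_of_lt (hdle y) hr
      have h2 : ∀ᶠ z in nhdsWithin x (Set.Ioi x), T z < r :=
        hTtendsto.eventually (eventually_lt_nhds h1)
      have h3 : ∀ᶠ z in nhdsWithin x (Set.Ioi x), z ∈ Set.Ioi x := self_mem_nhdsWithin
      filter_upwards [h2, h3] with z hz2 hz3
      exact lt_of_le_of_lt (hslope z hz3) hz2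
    exact hfin.frequently
  have main := image_le_of_liminf_slope_right_le_deriv_boundary
    (f := φ) (a := -t) (b := -s) hφcont.continuousOn (B := fun _ => φ (-t)) (B' := fun _ => 0)
    le_rfl continuousOn_const (fun x _ => hasDerivWithinAt_const x _ _) bound
  have hfinal := main (Set.right_mem_Icc.2 hab)
  have h1 : φ (-s) = -g s := by rw [hφ]; simp
  have h2 : φ (-t) = -g t := by rw [hφ]; simp
  rw [h1, h2] at hfinal
  linarith
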